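/- Let Z be a real separable Hilbert space and let (ψ̃_j)_{j∈ℕ} be a frame for Z with frame bounds 0 < λ ≤ Λ, i.e. λ²‖z‖² ≤ Σ_{j∈ℕ} ⟨z, ψ̃_j⟩² ≤ Λ²‖z‖² for all z ∈ Z. Let (w_j)_{j∈ℕ} ⊆ (0,1] and s ≥ 0. Define Z^s := { z ∈ Z : Σ_{j∈ℕ} ⟨z, ψ̃_j⟩² w_j^{−2s} < ∞ } with inner product ⟨z, z′⟩_{Z^s} := Σ_{j∈ℕ} ⟨z, ψ̃_j⟩⟨z′, ψ̃_j⟩ w_j^{−2s}. Then ⟨·,·⟩_{Z^s} is a well-defined inner product on Z^s (in particular the defining series converges absolutely), the norm it induces satisfies ‖z‖_Z ≤ λ^{−1}‖z‖_{Z^s} for all z ∈ Z^s, and Z^s equipped with this inner product is complete, hence a Hilbert space. -/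

import Mathlib

noncomputable section

/-- **The smoothness scale `Z^s` is a Hilbert space.**
Let `(ψ̃_j)` be a frame for the real separable Hilbert space `Z` with frame bounds
`0 < λ ≤ Λ`, let `(w_j) ⊆ (0,1]` and `s ≥ 0`, and let
`Z^s = { z : Σ_j ⟨z, ψ̃_j⟩² w_j^{−2s} < ∞ }` with inner product
`⟨z,z'⟩_{Z^s} = Σ_j ⟨z, ψ̃_j⟩⟨z', ψ̃_j⟩ w_j^{−2s}`.  Then `Z^s` is a linear subspace on
which the defining series converges absolutely, the induced norm dominates the `Z`-norm
via `‖z‖_Z ≤ λ⁻¹ ‖z‖_{Z^s}`, and `Z^s` is complete, hence a Hilbert space. -/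
theorem stmt_8 {Z : Type*}
    [NormedAddCommGroup Z] [InnerProductSpace ℝ Z] [CompleteSpace Z]
    [TopologicalSpace.SeparableSpace Z]
    (ψ : ℕ → Z) (lam Λ : ℝ) (hlam : 0 < lam) (hlamΛ : lam ≤ Λ)
    (hsum : ∀ z : Z, Summable fun j => (inner ℝ z (ψ j) : ℝ) ^ 2)
    (hlow : ∀ z : Z, lam ^ 2 * ‖z‖ ^ 2 ≤ ∑' j, (inner ℝ z (ψ j) : ℝ) ^ 2)
    (hup : ∀ z : Z, ∑' j, (inner ℝ z (ψ j) : ℝ) ^ 2 ≤ Λ ^ 2 * ‖z‖ ^ 2)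
    (w : ℕ → ℝ) (hw : ∀ j, 0 < w j ∧ w j ≤ 1) (s : ℝ) (hs : 0 ≤ s)
    (S : Set Z)
    (hS : S = {z : Z | Summable fun j => (inner ℝ z (ψ j) : ℝ) ^ 2 * w j ^ (-(2 * s))}) :
    (∀ z ∈ S, ∀ z' ∈ S, z + z' ∈ S) ∧
    (∀ c : ℝ, ∀ z ∈ S, c • z ∈ S) ∧
    (∀ z ∈ S, ∀ z' ∈ S,
      Summable fun j => |(inner ℝ z (ψ j) : ℝ) * (inner ℝ z' (ψ j) : ℝ)| * w j ^ (-(2 * s))) ∧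
    (∀ z ∈ S,
      ‖z‖ ≤ lam⁻¹ * Real.sqrt (∑' j, (inner ℝ z (ψ j) : ℝ) ^ 2 * w j ^ (-(2 * s)))) ∧
    (∀ u : ℕ → Z, (∀ n, u n ∈ S) →
      (∀ ε > (0 : ℝ), ∃ N : ℕ, ∀ m ≥ N, ∀ n ≥ N,
        ∑' j, (inner ℝ (u m - u n) (ψ j) : ℝ) ^ 2 * w j ^ (-(2 * s)) < ε) →
      ∃ z ∈ S, ∀ ε > (0 : ℝ), ∃ N : ℕ, ∀ n ≥ N,
        ∑' j, (inner ℝ (u n - z) (ψ j) : ℝ) ^ 2 * w j ^ (-(2 * s)) < ε) := by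
  subst hS
  have hWpos : ∀ j, (0:ℝ) < w j ^ (-(2*s)) := fun j => Real.rpow_pos_of_pos (hw j).1 _
  have hW1 : ∀ j, (1:ℝ) ≤ w j ^ (-(2*s)) := by
    intro j
    have h0 : (-(2*s)) ≤ 0 := by linarith
    calc (1:ℝ) = w j ^ (0:ℝ) := (Real.rpow_zero _).symm
      _ ≤ w j ^ (-(2*s)) := Real.rpow_le_rpow_of_exponent_ge (hw j).1 (hw j).2 h0
  set P : Z → Prop :=
    fun z => Summable fun j => (inner ℝ z (ψ j) : ℝ)^2 * w j ^ (-(2*s)) with hPdef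
  have hmem : ∀ z : Z,
      z ∈ {z : Z | Summable fun j => (inner ℝ z (ψ j) : ℝ) ^ 2 * w j ^ (-(2 * s))} ↔ P z :=
    fun z => Iff.rfl
  have hadd : ∀ z z', P z → P z' → P (z + z') := by
    intro z z' hz hz'
    refine Summable.of_nonneg_of_le
      (fun j => mul_nonneg (sq_nonneg _) (hWpos j).le) (fun j => ?_)
      (((hz.add hz').mul_left 2))
    rw [inner_add_left]
    have h1 := mul_nonneg (sq_nonneg ((inner ℝ z (ψ j) : ℝ) - inner ℝ z' (ψ j))) (hWpos j).le
    nlinarith [hWpos j]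
  have hsmul : ∀ (c : ℝ) z, P z → P (c • z) := by
    intro c z hz
    refine (hz.mul_left (c^2)).congr fun j => ?_
    rw [real_inner_smul_left]
    ring
  have hsub : ∀ z z', P z → P z' → P (z - z') := by
    intro z z' hz hz'
    have := hadd z ((-1 : ℝ) • z') hz (hsmul (-1) z' hz')
    simpa [sub_eq_add_neg] using this
  have hnorm : ∀ z, P z →
      ‖z‖ ≤ lam⁻¹ * Real.sqrt (∑' j, (inner ℝ z (ψ j) : ℝ)^2 * w j ^ (-(2*s))) := by
    intro z hz
    set T := ∑' j, (inner ℝ z (ψ j) : ℝ)^2 * w j ^ (-(2*s)) with hT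
    have hT0 : 0 ≤ T := tsum_nonneg fun j => mul_nonneg (sq_nonneg _) (hWpos j).le
    have hle : (∑' j, (inner ℝ z (ψ j) : ℝ)^2) ≤ T := by
      refine Summable.tsum_le_tsum (fun j => ?_) (hsum z) hz
      exact le_mul_of_one_le_right (sq_nonneg _) (hW1 j)
    have h1 : lam^2 * ‖z‖^2 ≤ T := le_trans (hlow z) hle
    have h2 : ‖z‖^2 ≤ (lam⁻¹)^2 * T := by
      rw [inv_pow, inv_mul_eq_div, le_div_iff₀ (by positivity)]
      nlinarith
    calc ‖z‖ = Real.sqrt (‖z‖^2) := (Real.sqrt_sq (norm_nonneg z)).symm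
      _ ≤ Real.sqrt ((lam⁻¹)^2 * T) := Real.sqrt_le_sqrt h2
      _ = lam⁻¹ * Real.sqrt T := by
          rw [Real.sqrt_mul (sq_nonneg _), Real.sqrt_sq (by positivity)]
  refine ⟨fun z hz z' hz' => hadd z z' hz hz',
    fun c z hz => hsmul c z hz, ?_, fun z hz => hnorm z hz, ?_⟩
  · -- absolute convergence of cross terms
    intro z hz z' hz'
    refine Summable.of_nonneg_of_le
      (fun j => mul_nonneg (abs_nonneg _) (hWpos j).le) (fun j => ?_) (hz.add hz')
    have h1 : |(inner ℝ z (ψ j) : ℝ) * inner ℝ z' (ψ j)| ≤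
        (inner ℝ z (ψ j) : ℝ)^2 + (inner ℝ z' (ψ j) : ℝ)^2 := by
      rcases abs_cases ((inner ℝ z (ψ j) : ℝ) * inner ℝ z' (ψ j)) with ⟨h, _⟩ | ⟨h, _⟩ <;>
        nlinarith [sq_nonneg ((inner ℝ z (ψ j) : ℝ) - inner ℝ z' (ψ j)),
          sq_nonneg ((inner ℝ z (ψ j) : ℝ) + inner ℝ z' (ψ j))]
    calc |(inner ℝ z (ψ j) : ℝ) * inner ℝ z' (ψ j)| * w j ^ (-(2*s))
        ≤ ((inner ℝ z (ψ j) : ℝ)^2 + (inner ℝ z' (ψ j) : ℝ)^2) * w j ^ (-(2*s)) :=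
          mul_le_mul_of_nonneg_right h1 (hWpos j).le
      _ = (inner ℝ z (ψ j) : ℝ)^2 * w j ^ (-(2*s)) +
          (inner ℝ z' (ψ j) : ℝ)^2 * w j ^ (-(2*s)) := by ring
  · -- completeness
    intro u hu hC
    have hPu : ∀ n, P (u n) := fun n => hu n
    have hPsub : ∀ m n, P (u m - u n) := fun m n => hsub _ _ (hPu m) (hPu n)
    -- u is Cauchy in Z
    have hcauchy : CauchySeq u := by
      rw [Metric.cauchySeq_iff]
      intro ε hε
      obtain ⟨N, hN⟩ := hC ((lam * ε)^2) (by positivity)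
      refine ⟨N, fun m hm n hn => ?_⟩
      have h1 := hnorm (u m - u n) (hPsub m n)
      have h2 := hN m hm n hn
      have h3 : Real.sqrt (∑' j, (inner ℝ (u m - u n) (ψ j) : ℝ)^2 * w j ^ (-(2*s)))
          < lam * ε := (Real.sqrt_lt' (by positivity)).2 h2
      calc dist (u m) (u n) = ‖u m - u n‖ := dist_eq_norm _ _
        _ ≤ lam⁻¹ * Real.sqrt (∑' j, (inner ℝ (u m - u n) (ψ j) : ℝ)^2 * w j ^ (-(2*s))) := h1
        _ < lam⁻¹ * (lam * ε) := by
            exact mul_lt_mul_of_pos_left h3 (by positivity)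
        _ = ε := by field_simp
    obtain ⟨z, hz⟩ := cauchySeq_tendsto_of_complete hcauchy
    -- key finite-sum limit lemma
    have key : ∀ (n : ℕ) (ε : ℝ) (M : ℕ),
        (∀ m ≥ M, (∑' j, (inner ℝ (u m - u n) (ψ j) : ℝ)^2 * w j ^ (-(2*s))) ≤ ε) →
        ∀ F : Finset ℕ, ∑ j ∈ F, (inner ℝ (z - u n) (ψ j) : ℝ)^2 * w j ^ (-(2*s)) ≤ ε := by
      intro n ε M hM F
      have htend : Filter.Tendsto
          (fun m => ∑ j ∈ F, (inner ℝ (u m - u n) (ψ j) : ℝ)^2 * w j ^ (-(2*s)))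
          Filter.atTop
          (nhds (∑ j ∈ F, (inner ℝ (z - u n) (ψ j) : ℝ)^2 * w j ^ (-(2*s)))) := by
        refine tendsto_finset_sum F fun j _ => ?_
        have h1 : Filter.Tendsto (fun m => (inner ℝ (u m - u n) (ψ j) : ℝ))
            Filter.atTop (nhds (inner ℝ (z - u n) (ψ j))) :=
          Filter.Tendsto.inner (hz.sub tendsto_const_nhds) tendsto_const_nhds
        exact (h1.pow 2).mul_const _
      refine le_of_tendsto htend ?_
      filter_upwards [Filter.eventually_ge_atTop M] with m hm
      calc ∑ j ∈ F, (inner ℝ (u m - u n) (ψ j) : ℝ)^2 * w j ^ (-(2*s))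
          ≤ ∑' j, (inner ℝ (u m - u n) (ψ j) : ℝ)^2 * w j ^ (-(2*s)) :=
            Summable.sum_le_tsum F (fun j _ => mul_nonneg (sq_nonneg _) (hWpos j).le) (hPsub m n)
        _ ≤ ε := hM m hm
    -- z ∈ S
    obtain ⟨N₀, hN₀⟩ := hC 1 one_pos
    have hbd : ∀ F : Finset ℕ,
        ∑ j ∈ F, (inner ℝ (z - u N₀) (ψ j) : ℝ)^2 * w j ^ (-(2*s)) ≤ 1 :=
      key N₀ 1 N₀ fun m hm => (hN₀ m hm N₀ le_rfl).le
    have hPz0 : P (z - u N₀) :=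
      summable_of_sum_le (fun j => mul_nonneg (sq_nonneg _) (hWpos j).le) hbd
    have hPz : P z := by
      have := hadd _ _ hPz0 (hPu N₀)
      simpa using this
    refine ⟨z, hPz, ?_⟩
    intro ε hε
    obtain ⟨N, hN⟩ := hC (ε/2) (by linarith)
    refine ⟨N, fun n hn => ?_⟩
    have hPn : P (u n - z) := hsub _ _ (hPu n) hPz
    have hfs : ∀ F : Finset ℕ,
        ∑ j ∈ F, (inner ℝ (u n - z) (ψ j) : ℝ)^2 * w j ^ (-(2*s)) ≤ ε/2 := by
      intro F
      have h1 := key n (ε/2) N (fun m hm => (hN m hm n hn).le) F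
      have h2 : ∀ j, ((inner ℝ (u n - z) (ψ j) : ℝ))^2 = ((inner ℝ (z - u n) (ψ j) : ℝ))^2 := by
        intro j
        have : (u n - z) = -(z - u n) := by abel
        rw [this, inner_neg_left]
        ring
      calc ∑ j ∈ F, (inner ℝ (u n - z) (ψ j) : ℝ)^2 * w j ^ (-(2*s))
          = ∑ j ∈ F, (inner ℝ (z - u n) (ψ j) : ℝ)^2 * w j ^ (-(2*s)) := by
            refine Finset.sum_congr rfl fun j _ => by rw [h2 j]
        _ ≤ ε/2 := h1
    have := Summable.tsum_le_of_sum_le hPn hfs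
    linarith
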